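/- Let O be an acyclic orientation of Y, let c = c_1 c_2 ⋯ c_m be a click-sequence applicable to O (each c_i is a source of the intermediate orientation), and let (v_1, v_2) be a directed edge of O. Then the occurrences of v_1 and v_2 in the sequence c alternate, with v_1 appearing first. -/

import Mathlib

namespace AcycPaper

variable {V : Type*}

/-- `r` is an orientation of the graph `Y`: exactly one direction per edge. -/
def IsOrientation (Y : SimpleGraph V) (r : V → V → Prop) : Prop :=
  (∀ i j, Y.Adj i j ↔ (r i j ∨ r j i)) ∧ ∀ i j, r i j → ¬ r j i

/-- A relation is acyclic if it has no directed cycles. -/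
def IsAcyclicRel (r : V → V → Prop) : Prop := ∀ v, ¬ Relation.TransGen r v v

/-- The set of acyclic orientations of `Y`. -/
def Acyc (Y : SimpleGraph V) : Set (V → V → Prop) :=
  {r | IsOrientation Y r ∧ IsAcyclicRel r}

/-- `v` is a source: no edge points into `v`. -/
def IsSource (r : V → V → Prop) (v : V) : Prop := ∀ j, ¬ r j v

open Classical in
/-- Click (source-to-sink move) at `v`: reverse all edges incident to `v`. -/
def click (r : V → V → Prop) (v : V) : V → V → Prop :=
  fun i j => if v = i ∨ v = j then r j i else r i j

/-- One click step between acyclic orientations. -/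
def ClickStep (Y : SimpleGraph V) (r r' : V → V → Prop) : Prop :=
  r ∈ Acyc Y ∧ ∃ v, IsSource r v ∧ r' = click r v

/-- κ-equivalence: the equivalence relation generated by clicks. -/
def KEquiv (Y : SimpleGraph V) : (V → V → Prop) → (V → V → Prop) → Prop :=
  Relation.EqvGen (ClickStep Y)

/-- The set of κ-equivalence classes of acyclic orientations. -/
def KQuot (Y : SimpleGraph V) := Quot (fun a b : Acyc Y => ClickStep Y a.1 b.1)

/-- κ(Y): number of κ-equivalence classes. -/
noncomputable def kappa (Y : SimpleGraph V) : ℕ := Nat.card (KQuot Y)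

/-- α(Y): number of acyclic orientations. -/
noncomputable def alpha (Y : SimpleGraph V) : ℕ := Nat.card (Acyc Y)

/-- `IsClickSeq r l`: the list of vertices `l` is a legal click-sequence from
`r`: each vertex is a source of the intermediate orientation when clicked. -/
def IsClickSeq (r : V → V → Prop) : List V → Prop
  | [] => True
  | v :: l => IsSource r v ∧ IsClickSeq (click r v) l

theorem alt_aux {V : Type*} [DecidableEq V] (v₁ v₂ : V) :
    ∀ (c : List V) (q : V → V → Prop), IsClickSeq q c →
    ∀ a b : V, ((a = v₁ ∧ b = v₂) ∨ (a = v₂ ∧ b = v₁)) → q a b →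
    ∀ i (hi : i < (c.filter (fun x => decide (x = v₁ ∨ x = v₂))).length),
      (c.filter (fun x => decide (x = v₁ ∨ x = v₂)))[i] = if Even i then a else b := by
  intro c
  induction c with
  | nil => intro q _ a b _ _ i hi; simp at hi
  | cons v l ih =>
    intro q hq a b hab hqab i hi
    obtain ⟨hsrc, hrest⟩ := hq
    by_cases hvb : v = b
    · exact absurd (hvb ▸ hqab) (hsrc a)
    by_cases hva : v = a
    · have hfil : (v :: l).filter (fun x => decide (x = v₁ ∨ x = v₂)) =
          v :: l.filter (fun x => decide (x = v₁ ∨ x = v₂)) := by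
        rcases hab with ⟨h1, h2⟩ | ⟨h1, h2⟩ <;> simp [List.filter_cons, hva, h1]
      have hq' : click q v b a := by
        simp [click, hva, hqab]
      have key := ih (click q v) hrest b a (by tauto) hq'
      simp only [hfil] at hi ⊢
      match i with
      | 0 => simp [hva]
      | (i+1) =>
        simp only [List.getElem_cons_succ]
        rw [key i (by simpa using hi)]
        rcases Nat.even_or_odd i with he | ho
        · simp [he, Nat.even_add_one]
        · simp [Nat.not_even_iff_odd.mpr ho, ho, Nat.even_add_one]
    · have hfil : (v :: l).filter (fun x => decide (x = v₁ ∨ x = v₂)) =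
          l.filter (fun x => decide (x = v₁ ∨ x = v₂)) := by
        rcases hab with ⟨h1, h2⟩ | ⟨h1, h2⟩ <;> subst h1 <;> subst h2 <;>
          simp [List.filter_cons, hva, hvb]
      have hq' : click q v a b := by
        simp [click, hva, hvb, hqab]
      simp only [hfil] at hi ⊢
      exact ih (click q v) hrest a b hab hq' i hi

/-- if (v₁,v₂) is a directed edge of an acyclic orientation r and
c is a click-sequence applicable to r, then the occurrences of v₁ and v₂ in c
alternate, with v₁ appearing first: the sublist of c consisting of the
occurrences of v₁ and v₂ is v₁ at even indices and v₂ at odd indices. -/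
theorem click_sequence_alternates {V : Type*} [Fintype V] [DecidableEq V]
    (Y : SimpleGraph V) (r : V → V → Prop) (hr : r ∈ Acyc Y)
    (c : List V) (hc : IsClickSeq r c) (v₁ v₂ : V) (h12 : r v₁ v₂) :
    ∀ (i : ℕ) (hi : i < (c.filter (fun x => decide (x = v₁ ∨ x = v₂))).length),
      (c.filter (fun x => decide (x = v₁ ∨ x = v₂)))[i] =
        if Even i then v₁ else v₂ := by
  exact alt_aux v₁ v₂ c r hc v₁ v₂ (Or.inl ⟨rfl, rfl⟩) h12

end AcycPaper
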